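/- Let V be a set, let 𝒞 be a finite nested family of subsets of V, let B ∈ 𝒞, and let A be a subset of V that is not nested with B. Then μ(A∩B, 𝒞) + μ(A∩B*, 𝒞) < μ(A, 𝒞), where for a subset S of V, μ(S, 𝒞) denotes the number of elements of 𝒞 that are not nested with S. -/

import Mathlib

/-- Two subsets of `V` are nested if at least one of the four corners
`A ∩ B`, `A ∩ Bᶜ`, `Aᶜ ∩ B`, `Aᶜ ∩ Bᶜ` is empty. -/
def Nested {V : Type*} (A B : Set V) : Prop :=
  A ∩ B = ∅ ∨ A ∩ Bᶜ = ∅ ∨ Aᶜ ∩ B = ∅ ∨ Aᶜ ∩ Bᶜ = ∅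

/-- `mu S 𝒞` is the number of members of `𝒞` that are not nested with `S`. -/
noncomputable def mu {V : Type*} (S : Set V) (𝒞 : Set (Set V)) : ℕ :=
  {C ∈ 𝒞 | ¬ Nested S C}.ncard

private lemma disjE {V : Type*} {X Y : Set V} (h : X ∩ Y = ∅) {x : V}
    (hx : x ∈ X) (hy : x ∈ Y) : False :=
  Set.eq_empty_iff_forall_notMem.mp h x ⟨hx, hy⟩

private lemma nested_compl_left {V : Type*} {A B : Set V} (h : Nested A B) : Nested Aᶜ B := by
  simp only [Nested, compl_compl] at *; tauto

private lemma nested_compl_right {V : Type*} {A B : Set V} (h : Nested A B) : Nested A Bᶜ := by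
  simp only [Nested, compl_compl] at *; tauto

/-- Key uncrossing lemma: if `B` and `C` are nested, `A` and `C` are nested, but `A` and `B`
are not nested, then `A ∩ B` and `C` are nested. -/
private lemma key {V : Type*} {A B C : Set V} (hBC : Nested B C) (hAB : ¬ Nested A B)
    (hAC : Nested A C) : Nested (A ∩ B) C := by
  rw [Nested] at hAB
  push_neg at hAB
  obtain ⟨h1, h2, h3, h4⟩ := hAB
  obtain ⟨x3, hx3A, hx3B⟩ := h3
  obtain ⟨x4, hx4A, hx4B⟩ := h4
  rw [Set.mem_compl_iff] at hx3A hx4A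
  rw [Set.mem_compl_iff] at hx4B
  rcases hAC with h | h | h | h
  · -- A ∩ C = ∅
    exact Or.inl (Set.eq_empty_iff_forall_notMem.mpr fun x ⟨⟨hA, _⟩, hC⟩ => disjE h hA hC)
  · -- A ∩ Cᶜ = ∅
    exact Or.inr <| Or.inl
      (Set.eq_empty_iff_forall_notMem.mpr fun x ⟨⟨hA, _⟩, hC⟩ => disjE h hA hC)
  · -- Aᶜ ∩ C = ∅, i.e. C ⊆ A
    rcases hBC with g | g | g | g
    · exact Or.inl (Set.eq_empty_iff_forall_notMem.mpr fun x ⟨⟨_, hB⟩, hC⟩ => disjE g hB hC)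
    · -- B ⊆ C ⊆ A, contradicts x3 ∈ Aᶜ ∩ B
      exfalso
      by_cases hx3C : x3 ∈ C
      · exact disjE h hx3A hx3C
      · exact disjE g hx3B hx3C
    · -- C ⊆ B and C ⊆ A, so C ⊆ A ∩ B
      refine Or.inr <| Or.inr <| Or.inl (Set.eq_empty_iff_forall_notMem.mpr ?_)
      rintro x ⟨hnAB, hC⟩
      refine hnAB ⟨?_, ?_⟩
      · by_contra hxA; exact disjE h hxA hC
      · by_contra hxB; exact disjE g hxB hC
    · -- Bᶜ ⊆ C ⊆ A, contradicts x4 ∈ Aᶜ ∩ Bᶜ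
      exfalso
      by_cases hx4C : x4 ∈ C
      · exact disjE h hx4A hx4C
      · exact disjE g hx4B hx4C
  · -- Aᶜ ∩ Cᶜ = ∅, i.e. Aᶜ ⊆ C
    rcases hBC with g | g | g | g
    · -- B ∩ C = ∅; then x3 ∈ Aᶜ ⊆ C and x3 ∈ B, contradiction
      exfalso
      by_cases hx3C : x3 ∈ C
      · exact disjE g hx3B hx3C
      · exact disjE h hx3A hx3C
    · -- B ⊆ C
      exact Or.inr <| Or.inl
        (Set.eq_empty_iff_forall_notMem.mpr fun x ⟨⟨_, hB⟩, hC⟩ => disjE g hB hC)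
    · -- C ⊆ B; then x4 ∈ Aᶜ ⊆ C ⊆ B, contradiction with x4 ∉ B
      exfalso
      by_cases hx4C : x4 ∈ C
      · exact disjE g hx4B hx4C
      · exact disjE h hx4A hx4C
    · -- Bᶜ ⊆ C and Aᶜ ⊆ C, so (A ∩ B)ᶜ ⊆ C
      refine Or.inr <| Or.inr <| Or.inr (Set.eq_empty_iff_forall_notMem.mpr ?_)
      rintro x ⟨hnAB, hCc⟩
      rw [Set.mem_compl_iff] at hnAB hCc
      by_cases hxA : x ∈ A
      · have hxB : x ∉ B := fun hxB => hnAB ⟨hxA, hxB⟩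
        exact disjE g hxB hCc
      · exact disjE h hxA hCc

/-- Every member of a family nested with `B` is nested with `A ∩ B` or with `A ∩ Bᶜ`. -/
private lemma claim2 {V : Type*} {B C : Set V} (hBC : Nested B C) (A : Set V) :
    Nested (A ∩ B) C ∨ Nested (A ∩ Bᶜ) C := by
  rcases hBC with g | g | g | g
  · exact Or.inl <| Or.inl
      (Set.eq_empty_iff_forall_notMem.mpr fun x ⟨⟨_, hB⟩, hC⟩ => disjE g hB hC)
  · exact Or.inl <| Or.inr <| Or.inl
      (Set.eq_empty_iff_forall_notMem.mpr fun x ⟨⟨_, hB⟩, hC⟩ => disjE g hB hC)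
  · exact Or.inr <| Or.inl
      (Set.eq_empty_iff_forall_notMem.mpr fun x ⟨⟨_, hB⟩, hC⟩ => disjE g hB hC)
  · exact Or.inr <| Or.inr <| Or.inl
      (Set.eq_empty_iff_forall_notMem.mpr fun x ⟨⟨_, hB⟩, hC⟩ => disjE g hB hC)

/-- If `𝒞` is a finite nested family, `B ∈ 𝒞`, and `A` is not nested with `B`, then
`μ(A ∩ B, 𝒞) + μ(A ∩ Bᶜ, 𝒞) < μ(A, 𝒞)`. -/
theorem mu_corners_lt {V : Type*} (𝒞 : Set (Set V)) (h𝒞fin : 𝒞.Finite)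
    (h𝒞nested : ∀ C ∈ 𝒞, ∀ D ∈ 𝒞, Nested C D)
    (B : Set V) (hB : B ∈ 𝒞) (A : Set V) (hAB : ¬ Nested A B) :
    mu (A ∩ B) 𝒞 + mu (A ∩ Bᶜ) 𝒞 < mu A 𝒞 := by
  set S : Set (Set V) := {C ∈ 𝒞 | ¬ Nested A C} with hS
  set S₁ : Set (Set V) := {C ∈ 𝒞 | ¬ Nested (A ∩ B) C} with hS₁
  set S₂ : Set (Set V) := {C ∈ 𝒞 | ¬ Nested (A ∩ Bᶜ) C} with hS₂
  have hSfin : S.Finite := h𝒞fin.subset (Set.sep_subset _ _)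
  have hS₁fin : S₁.Finite := h𝒞fin.subset (Set.sep_subset _ _)
  have hS₂fin : S₂.Finite := h𝒞fin.subset (Set.sep_subset _ _)
  have hABc : ¬ Nested A Bᶜ := fun h => hAB (by simpa [compl_compl] using nested_compl_right h)
  -- S₁ ⊆ S \ {B}
  have hsub1 : S₁ ⊆ S \ {B} := by
    rintro C ⟨hC, hCn⟩
    refine ⟨⟨hC, fun hAC => hCn (key (h𝒞nested B hB C hC) hAB hAC)⟩, ?_⟩
    rintro rfl
    exact hCn (Or.inr <| Or.inl (by rw [Set.inter_assoc, Set.inter_compl_self, Set.inter_empty]))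
  have hsub2 : S₂ ⊆ S \ {B} := by
    rintro C ⟨hC, hCn⟩
    refine ⟨⟨hC, fun hAC =>
      hCn (key (nested_compl_left (h𝒞nested B hB C hC)) hABc hAC)⟩, ?_⟩
    rintro rfl
    exact hCn (Or.inl (by rw [Set.inter_assoc, Set.compl_inter_self, Set.inter_empty]))
  -- S₁ and S₂ are disjoint
  have hdisj : Disjoint S₁ S₂ := by
    rw [Set.disjoint_left]
    rintro C ⟨hC, hC1⟩ ⟨_, hC2⟩
    rcases claim2 (h𝒞nested B hB C hC) A with h | h
    · exact hC1 h
    · exact hC2 h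
  -- B ∈ S
  have hBS : B ∈ S := ⟨hB, hAB⟩
  have h1 : mu (A ∩ B) 𝒞 + mu (A ∩ Bᶜ) 𝒞 = (S₁ ∪ S₂).ncard := by
    rw [mu, mu, ← hS₁, ← hS₂, Set.ncard_union_eq hdisj hS₁fin hS₂fin]
  rw [h1, mu, ← hS]
  calc (S₁ ∪ S₂).ncard ≤ (S \ {B}).ncard :=
        Set.ncard_le_ncard (Set.union_subset hsub1 hsub2) hSfin.diff
    _ < S.ncard := Set.ncard_diff_singleton_lt_of_mem hBS hSfin
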